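/- Let A, B, C be points on the unit circle in ℝ² and let 0 ≤ ε < 1. If ‖A − B‖ + ‖B − C‖ + ‖A − C‖ ≥ 3√3 − ε, then each of the three distances ‖A − B‖, ‖B − C‖, ‖A − C‖ lies in the interval [√3 − 3√ε, √3 + 3√ε]. -/

import Mathlib

open Real

private lemma key_ineq (a u r : ℝ) (hr : r^2 = 3) (hr0 : 0 ≤ r)
    (ha : 0 ≤ a) (hu0 : 0 ≤ u) (hu2 : u ≤ 2)
    (hcon : a^2 = u^2*(4-u^2)) :
    a + 2*u ≤ 3*r - (a-r)^2/9 := by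
  have hr17 : 1.7 ≤ r := by nlinarith
  have hr2 : r ≤ 1.8 := by nlinarith
  have hQ : 0 ≤ u^6+2*r*u^5+u^4-(36+4*r)*u^3+(76-54*r)*u^2+(164*r-72)*u+(732-54*r) := by
    nlinarith [pow_nonneg hu0 3, pow_nonneg hu0 5, pow_nonneg hu0 6, sq_nonneg u,
      mul_nonneg (pow_nonneg hu0 3) (by linarith : (0:ℝ) ≤ 2 - u),
      mul_nonneg (sq_nonneg u) (by linarith : (0:ℝ) ≤ 2 - u)]
  have hp1 : 0 ≤ u^4 - 4*u^2 - 18*u + 27*r - 3 := by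
    nlinarith [sq_nonneg (u^2 - 2)]
  have hsq : (9-2*r)^2*(u^2*(4-u^2)) ≤ (u^4 - 4*u^2 - 18*u + 27*r - 3)^2 := by
    have key : (u^4 - 4*u^2 - 18*u + 27*r - 3)^2 - (9-2*r)^2*(u^2*(4-u^2))
        = (u-r)^2 * (u^6+2*r*u^5+u^4-(36+4*r)*u^3+(76-54*r)*u^2+(164*r-72)*u+(732-54*r))
          + (r^2-3) * (3*u^6 - 2*r*u^5 - 5*u^4 + (4*r-72)*u^3 + (236+54*r)*u^2
              - (36+164*r)*u + (54*r-3)) := by ring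
    have key2 : (u^4 - 4*u^2 - 18*u + 27*r - 3)^2 - (9-2*r)^2*(u^2*(4-u^2))
        = (u-r)^2 * (u^6+2*r*u^5+u^4-(36+4*r)*u^3+(76-54*r)*u^2+(164*r-72)*u+(732-54*r)) := by
      rw [key, hr]; ring
    nlinarith [mul_nonneg (sq_nonneg (u-r)) hQ]
  have hlin : (9-2*r)*a ≤ u^4 - 4*u^2 - 18*u + 27*r - 3 := by
    have h9 : 0 ≤ (9-2*r)*a := mul_nonneg (by linarith) ha
    nlinarith [hsq, hcon, hp1, h9]
  nlinarith [hlin, hcon, hr]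

private lemma pair_bound (X Y Z : EuclideanSpace ℝ (Fin 2))
    (hX : ‖X‖ = 1) (hY : ‖Y‖ = 1) (hZ : ‖Z‖ = 1) :
    ‖Z - X‖ + ‖Z - Y‖ ≤ 2 * Real.sqrt (2 + ‖X + Y‖) := by
  set n := ‖X + Y‖ with hn
  have hn0 : 0 ≤ n := norm_nonneg _
  have h1 : ‖Z - X‖^2 = 2 - 2 * inner ℝ Z X := by
    rw [norm_sub_sq_real, hZ, hX]; ring
  have h2 : ‖Z - Y‖^2 = 2 - 2 * inner ℝ Z Y := by
    rw [norm_sub_sq_real, hZ, hY]; ring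
  have h3 : (inner ℝ Z X : ℝ) + inner ℝ Z Y = inner ℝ Z (X + Y) := (inner_add_right Z X Y).symm
  have h4 : -(n:ℝ) ≤ inner ℝ Z (X + Y) := by
    linarith [abs_real_inner_le_norm Z (X + Y), neg_abs_le (inner ℝ Z (X+Y) : ℝ),
      (by rw [hZ, one_mul] : ‖Z‖ * ‖X+Y‖ = n)]
  have hsum2 : ‖Z - X‖^2 + ‖Z - Y‖^2 ≤ 4 + 2*n := by
    rw [h1, h2]; linarith
  have hs : (‖Z - X‖ + ‖Z - Y‖)^2 ≤ 4*(2+n) := by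
    nlinarith [sq_nonneg (‖Z - X‖ - ‖Z - Y‖)]
  have hnn : 0 ≤ ‖Z - X‖ + ‖Z - Y‖ := by positivity
  calc ‖Z - X‖ + ‖Z - Y‖ = Real.sqrt ((‖Z - X‖ + ‖Z - Y‖)^2) := (Real.sqrt_sq hnn).symm
    _ ≤ Real.sqrt (4*(2+n)) := Real.sqrt_le_sqrt hs
    _ = 2 * Real.sqrt (2+n) := by
        rw [show (4:ℝ)*(2+n) = 2^2*(2+n) by ring, Real.sqrt_mul (by positivity),
          Real.sqrt_sq (by norm_num)]

private lemma side_bound (X Y Z : EuclideanSpace ℝ (Fin 2))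
    (hX : ‖X‖ = 1) (hY : ‖Y‖ = 1) (hZ : ‖Z‖ = 1)
    (ε : ℝ) (hε0 : 0 ≤ ε)
    (hper : ‖X - Y‖ + (‖Z - X‖ + ‖Z - Y‖) ≥ 3 * Real.sqrt 3 - ε) :
    ‖X - Y‖ ∈ Set.Icc (Real.sqrt 3 - 3 * Real.sqrt ε) (Real.sqrt 3 + 3 * Real.sqrt ε) := by
  set a := ‖X - Y‖ with hadef
  set n := ‖X + Y‖ with hndef
  set u := Real.sqrt (2 + n) with hudef
  have hn0 : 0 ≤ n := norm_nonneg _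
  have hn2 : n ≤ 2 := by
    calc n ≤ ‖X‖ + ‖Y‖ := norm_add_le X Y
      _ = 2 := by rw [hX, hY]; norm_num
  have hu2' : u^2 = 2 + n := Real.sq_sqrt (by linarith)
  have hu0 : 0 ≤ u := Real.sqrt_nonneg _
  have hu2 : u ≤ 2 := by
    have h4 : Real.sqrt 4 = 2 := by
      rw [show (4:ℝ) = 2^2 by norm_num, Real.sqrt_sq (by norm_num : (0:ℝ) ≤ 2)]
    have := Real.sqrt_le_sqrt (by linarith : 2 + n ≤ 4)
    rw [h4] at this; exact this
  -- parallelogram law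
  have hpar : a^2 + n^2 = 4 := by
    rw [hadef, hndef, norm_sub_sq_real, norm_add_sq_real, hX, hY]; ring
  have hcon : a^2 = u^2*(4-u^2) := by
    rw [hu2']; nlinarith [hpar]
  have ha0 : 0 ≤ a := norm_nonneg _
  have hr : (Real.sqrt 3)^2 = 3 := Real.sq_sqrt (by norm_num)
  have hr0 : 0 ≤ Real.sqrt 3 := Real.sqrt_nonneg _
  have hkey := key_ineq a u (Real.sqrt 3) hr hr0 ha0 hu0 hu2 hcon
  have hpb := pair_bound X Y Z hX hY hZ
  have hεsq : (a - Real.sqrt 3)^2 ≤ 9 * ε := by linarith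
  have habs : |a - Real.sqrt 3| ≤ 3 * Real.sqrt ε := by
    calc |a - Real.sqrt 3| = Real.sqrt ((a - Real.sqrt 3)^2) := (Real.sqrt_sq_eq_abs _).symm
      _ ≤ Real.sqrt (9 * ε) := Real.sqrt_le_sqrt hεsq
      _ = 3 * Real.sqrt ε := by
          rw [show (9:ℝ)*ε = 3^2*ε by ring, Real.sqrt_mul (by positivity),
            Real.sqrt_sq (by norm_num)]
  rw [abs_le] at habs
  constructor <;> linarith [habs.1, habs.2]

/-- Lemma: a triangle inscribed in the unit circle with perimeter at least `3√3 - ε`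
has all side lengths within `3√ε` of `√3`. -/
theorem stmt1 (A B C : EuclideanSpace ℝ (Fin 2))
    (hA : ‖A‖ = 1) (hB : ‖B‖ = 1) (hC : ‖C‖ = 1)
    (ε : ℝ) (hε0 : 0 ≤ ε) (hε1 : ε < 1)
    (hper : ‖A - B‖ + ‖B - C‖ + ‖A - C‖ ≥ 3 * Real.sqrt 3 - ε) :
    ‖A - B‖ ∈ Set.Icc (Real.sqrt 3 - 3 * Real.sqrt ε) (Real.sqrt 3 + 3 * Real.sqrt ε) ∧
    ‖B - C‖ ∈ Set.Icc (Real.sqrt 3 - 3 * Real.sqrt ε) (Real.sqrt 3 + 3 * Real.sqrt ε) ∧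
    ‖A - C‖ ∈ Set.Icc (Real.sqrt 3 - 3 * Real.sqrt ε) (Real.sqrt 3 + 3 * Real.sqrt ε) := by
  have e1 : ‖C - A‖ = ‖A - C‖ := norm_sub_rev C A
  have e2 : ‖C - B‖ = ‖B - C‖ := norm_sub_rev C B
  have e3 : ‖B - A‖ = ‖A - B‖ := norm_sub_rev B A
  refine ⟨side_bound A B C hA hB hC ε hε0 (by rw [e1, e2]; linarith),
    side_bound B C A hB hC hA ε hε0 (by linarith),
    side_bound A C B hA hC hB ε hε0 (by rw [e3]; linarith)⟩
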